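/- The maps C ↦ C^{⟨d⟩} and C ↦ C_{*d} are monotone increasing functions of C for every fixed positive integer d. -/

import Mathlib

open Finset

/-- Upper bound on a partial Macaulay expansion: the next binomial dominates. -/
lemma macaulay_bound1 (d : ℕ) (M : ℕ) (m : ℕ → ℕ)
    (h : ∀ i ∈ Icc 1 d, m i + d ≤ M + i) :
    (∑ i ∈ Icc 1 d, Nat.choose (m i) i) + 1 ≤ Nat.choose (M + 1) d := by
  induction d generalizing M with
  | zero => simp
  | succ d ih =>
    rw [Finset.sum_Icc_succ_top (by omega)]
    have hm : m (d + 1) ≤ M := by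
      have := h (d + 1) (by simp); omega
    have h1 := h 1 (by simp [Nat.succ_le_succ])
    by_cases hM : M = 0
    · have hd0 : d = 0 := by omega
      subst hd0; subst hM
      simp_all
    · have hM1 : 1 ≤ M := by omega
      have ihM := ih (M - 1) (fun i hi => by
        have hmem : i ∈ Icc 1 (d + 1) := by
          simp only [Finset.mem_Icc] at hi ⊢; omega
        have := h i hmem; omega)
      have hrw : M - 1 + 1 = M := by omega
      rw [hrw] at ihM
      have htop : Nat.choose (m (d + 1)) (d + 1) ≤ Nat.choose M (d + 1) :=
        Nat.choose_le_choose _ hm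
      have hpascal : Nat.choose (M + 1) (d + 1) = Nat.choose M d + Nat.choose M (d + 1) :=
        Nat.choose_succ_succ M d
      omega

/-- Upper bound for the `⟨d⟩` sum. -/
lemma macaulay_bound2 (d : ℕ) (M : ℕ) (m : ℕ → ℕ)
    (h : ∀ i ∈ Icc 1 d, m i + d ≤ M + i) :
    (∑ i ∈ Icc 1 d, Nat.choose (m i + 1) (i + 1)) + 1 ≤ Nat.choose (M + 2) (d + 1) := by
  induction d generalizing M with
  | zero => simp
  | succ d ih =>
    rw [Finset.sum_Icc_succ_top (by omega)]
    have hm : m (d + 1) ≤ M := by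
      have := h (d + 1) (by simp); omega
    have h1 := h 1 (by simp [Nat.succ_le_succ])
    by_cases hM : M = 0
    · have hd0 : d = 0 := by omega
      subst hd0; subst hM
      have hm0 : m 1 = 0 := by omega
      simp_all
    · have hM1 : 1 ≤ M := by omega
      have ihM := ih (M - 1) (fun i hi => by
        have hmem : i ∈ Icc 1 (d + 1) := by
          simp only [Finset.mem_Icc] at hi ⊢; omega
        have := h i hmem; omega)
      have hrw : M - 1 + 2 = M + 1 := by omega
      rw [hrw] at ihM
      have htop : Nat.choose (m (d + 1) + 1) (d + 1 + 1) ≤ Nat.choose (M + 1) (d + 1 + 1) :=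
        Nat.choose_le_choose _ (by omega)
      have hpascal : Nat.choose (M + 2) (d + 1 + 1) =
          Nat.choose (M + 1) (d + 1) + Nat.choose (M + 1) (d + 1 + 1) :=
        Nat.choose_succ_succ (M + 1) (d + 1)
      omega

/-- Upper bound for the `*d` sum. -/
lemma macaulay_bound3 (d : ℕ) (M : ℕ) (m : ℕ → ℕ)
    (h : ∀ i ∈ Icc 2 (d + 1), m i + (d + 1) ≤ M + i)
    (hpos : ∀ i ∈ Icc 2 (d + 1), 1 ≤ m i) :
    (∑ i ∈ Icc 2 (d + 1), Nat.choose (m i - 1) (i - 1)) + 1 ≤ Nat.choose M d := by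
  induction d generalizing M with
  | zero => simp
  | succ d ih =>
    rw [Finset.sum_Icc_succ_top (by omega)]
    have hm : m (d + 1 + 1) ≤ M := by
      have := h (d + 1 + 1) (by simp only [Finset.mem_Icc]; omega); omega
    have hmp : 1 ≤ m (d + 1 + 1) := hpos (d + 1 + 1) (by simp only [Finset.mem_Icc]; omega)
    have hM1 : 1 ≤ M := by omega
    have ihM := ih (M - 1)
      (fun i hi => by
        have hmem : i ∈ Icc 2 (d + 1 + 1) := by
          simp only [Finset.mem_Icc] at hi ⊢; omega
        have := h i hmem; omega)
      (fun i hi => hpos i (by simp only [Finset.mem_Icc] at hi ⊢; omega))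
    have htop : Nat.choose (m (d + 1 + 1) - 1) (d + 1 + 1 - 1) ≤ Nat.choose (M - 1) (d + 1) :=
      Nat.choose_le_choose _ (by omega)
    have hpascal : Nat.choose M (d + 1) =
        Nat.choose (M - 1) d + Nat.choose (M - 1) (d + 1) := by
      have : M = (M - 1) + 1 := by omega
      rw [this]; exact Nat.choose_succ_succ (M - 1) d
    omega

/-- Main combinatorial lemma, stated on natural numbers `m i = i + ε i`. -/
lemma macaulay_key (d : ℕ) (m m' : ℕ → ℕ)
    (h1 : ∀ i ∈ Icc 1 d, i ≤ m i + 1)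
    (h2 : ∀ i ∈ Icc 1 d, ∀ j ∈ Icc 1 d, i ≤ j → m i + j ≤ m j + i)
    (h1' : ∀ i ∈ Icc 1 d, i ≤ m' i + 1)
    (h2' : ∀ i ∈ Icc 1 d, ∀ j ∈ Icc 1 d, i ≤ j → m' i + j ≤ m' j + i)
    (hC : (∑ i ∈ Icc 1 d, Nat.choose (m i) i) ≤ ∑ i ∈ Icc 1 d, Nat.choose (m' i) i) :
    ((∑ i ∈ Icc 1 d, Nat.choose (m i + 1) (i + 1)) ≤
      ∑ i ∈ Icc 1 d, Nat.choose (m' i + 1) (i + 1)) ∧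
    ((∑ i ∈ Icc 2 d, Nat.choose (m i - 1) (i - 1)) ≤
      ∑ i ∈ Icc 2 d, Nat.choose (m' i - 1) (i - 1)) := by
  induction d with
  | zero => simp
  | succ d ih =>
    have hmemtop : d + 1 ∈ Icc 1 (d + 1) := by simp
    rcases lt_trichotomy (m (d + 1)) (m' (d + 1)) with hlt | heq | hgt
    · -- m (d+1) < m' (d+1) : bound both sums directly
      constructor
      · have hb := macaulay_bound2 (d + 1) (m (d + 1)) m (fun i hi => by
          have := h2 i hi (d + 1) hmemtop (by simp only [Finset.mem_Icc] at hi; omega)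
          omega)
        have hmono : Nat.choose (m (d + 1) + 2) (d + 1 + 1) ≤
            Nat.choose (m' (d + 1) + 1) (d + 1 + 1) :=
          Nat.choose_le_choose _ (by omega)
        have hge : Nat.choose (m' (d + 1) + 1) (d + 1 + 1) ≤
            ∑ i ∈ Icc 1 (d + 1), Nat.choose (m' i + 1) (i + 1) := by
          rw [Finset.sum_Icc_succ_top (by omega)]
          exact Nat.le_add_left _ _
        omega
      · rcases Nat.eq_zero_or_pos d with hd0 | hd1
        · subst hd0; simp
        · have hb := macaulay_bound3 d (m (d + 1)) m
            (fun i hi => by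
              have hmem : i ∈ Icc 1 (d + 1) := by
                simp only [Finset.mem_Icc] at hi ⊢; omega
              have := h2 i hmem (d + 1) hmemtop (by simp only [Finset.mem_Icc] at hi; omega)
              omega)
            (fun i hi => by
              have hmem : i ∈ Icc 1 (d + 1) := by
                simp only [Finset.mem_Icc] at hi ⊢; omega
              have := h1 i hmem
              simp only [Finset.mem_Icc] at hi
              omega)
          have hmono : Nat.choose (m (d + 1)) d ≤ Nat.choose (m' (d + 1) - 1) d :=
            Nat.choose_le_choose _ (by omega)
          have hge : Nat.choose (m' (d + 1) - 1) (d + 1 - 1) ≤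
              ∑ i ∈ Icc 2 (d + 1), Nat.choose (m' i - 1) (i - 1) := by
            rw [Finset.sum_Icc_succ_top (by omega)]
            exact Nat.le_add_left _ _
          have hidx : d + 1 - 1 = d := rfl
          rw [hidx] at hge
          omega
    · -- equal top coefficients: peel off and use induction hypothesis
      have hsub : ∀ i, i ∈ Icc 1 d → i ∈ Icc 1 (d + 1) := by
        intro i hi; simp only [Finset.mem_Icc] at hi ⊢; omega
      have hC' : (∑ i ∈ Icc 1 d, Nat.choose (m i) i) ≤
          ∑ i ∈ Icc 1 d, Nat.choose (m' i) i := by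
        rw [Finset.sum_Icc_succ_top (by omega), Finset.sum_Icc_succ_top (by omega)] at hC
        rw [heq] at hC
        omega
      obtain ⟨ha, hb⟩ := ih (fun i hi => h1 i (hsub i hi))
        (fun i hi j hj => h2 i (hsub i hi) j (hsub j hj))
        (fun i hi => h1' i (hsub i hi))
        (fun i hi j hj => h2' i (hsub i hi) j (hsub j hj)) hC'
      constructor
      · rw [Finset.sum_Icc_succ_top (by omega), Finset.sum_Icc_succ_top (by omega), heq]
        omega
      · rcases Nat.eq_zero_or_pos d with hd0 | hd1
        · subst hd0; simp
        · rw [Finset.sum_Icc_succ_top (by omega), Finset.sum_Icc_succ_top (by omega), heq]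
          omega
    · -- m (d+1) > m' (d+1) : contradiction with hC
      exfalso
      have hb := macaulay_bound1 (d + 1) (m (d + 1) - 1) m' (fun i hi => by
        have := h2' i hi (d + 1) hmemtop (by simp only [Finset.mem_Icc] at hi; omega)
        omega)
      have hrw : m (d + 1) - 1 + 1 = m (d + 1) := by omega
      rw [hrw] at hb
      have hge : Nat.choose (m (d + 1)) (d + 1) ≤
          ∑ i ∈ Icc 1 (d + 1), Nat.choose (m i) i := by
        rw [Finset.sum_Icc_succ_top (by omega)]
        exact Nat.le_add_left _ _
      omega

def IsMacaulayExp (d C : ℕ) (ε : ℕ → ℤ) : Prop :=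
  (∀ i ∈ Finset.Icc 1 d, (-1 : ℤ) ≤ ε i) ∧
  (∀ i ∈ Finset.Icc 1 d, ∀ j ∈ Finset.Icc 1 d, i ≤ j → ε i ≤ ε j) ∧
  (C : ℤ) = ∑ i ∈ Finset.Icc 1 d, (Nat.choose ((i : ℤ) + ε i).toNat i : ℤ)

/-- The maps `C ↦ C^{⟨d⟩}` and `C ↦ C_{*d}` are monotone increasing in `C`, where
`C^{⟨d⟩} = Σ_{i=1}^d binom(i + ε_i + 1, i + 1)` and
`C_{*d} = Σ_{i=2}^d binom(i + ε_i − 1, i − 1)` are defined via the Macaulay `d`-expansion. -/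
theorem macaulay_functions_monotone (d : ℕ) (hd : 0 < d) (C C' : ℕ) (hCC : C ≤ C')
    (ε ε' : ℕ → ℤ) (hε : IsMacaulayExp d C ε) (hε' : IsMacaulayExp d C' ε') :
    (∑ i ∈ Finset.Icc 1 d, Nat.choose ((i : ℤ) + ε i + 1).toNat (i + 1) ≤
      ∑ i ∈ Finset.Icc 1 d, Nat.choose ((i : ℤ) + ε' i + 1).toNat (i + 1)) ∧
    (∑ i ∈ Finset.Icc 2 d, Nat.choose ((i : ℤ) + ε i - 1).toNat (i - 1) ≤
      ∑ i ∈ Finset.Icc 2 d, Nat.choose ((i : ℤ) + ε' i - 1).toNat (i - 1)) := by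
  obtain ⟨hb, hmono, hsum⟩ := hε
  obtain ⟨hb', hmono', hsum'⟩ := hε'
  set m : ℕ → ℕ := fun i => ((i : ℤ) + ε i).toNat with hm
  set m' : ℕ → ℕ := fun i => ((i : ℤ) + ε' i).toNat with hm'
  have hCm : C = ∑ i ∈ Icc 1 d, Nat.choose (m i) i := by
    have : (C : ℤ) = ((∑ i ∈ Icc 1 d, Nat.choose (m i) i : ℕ) : ℤ) := by
      rw [hsum]; push_cast; rfl
    exact_mod_cast this
  have hCm' : C' = ∑ i ∈ Icc 1 d, Nat.choose (m' i) i := by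
    have : (C' : ℤ) = ((∑ i ∈ Icc 1 d, Nat.choose (m' i) i : ℕ) : ℤ) := by
      rw [hsum']; push_cast; rfl
    exact_mod_cast this
  have h1 : ∀ i ∈ Icc 1 d, i ≤ m i + 1 := fun i hi => by
    have := hb i hi; simp only [hm]; omega
  have h1' : ∀ i ∈ Icc 1 d, i ≤ m' i + 1 := fun i hi => by
    have := hb' i hi; simp only [hm']; omega
  have h2 : ∀ i ∈ Icc 1 d, ∀ j ∈ Icc 1 d, i ≤ j → m i + j ≤ m j + i := fun i hi j hj hij => by
    have := hmono i hi j hj hij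
    have := hb i hi
    have hi1 : 1 ≤ i := by simp only [Finset.mem_Icc] at hi; omega
    simp only [hm]; omega
  have h2' : ∀ i ∈ Icc 1 d, ∀ j ∈ Icc 1 d, i ≤ j → m' i + j ≤ m' j + i := fun i hi j hj hij => by
    have := hmono' i hi j hj hij
    have := hb' i hi
    have hi1 : 1 ≤ i := by simp only [Finset.mem_Icc] at hi; omega
    simp only [hm']; omega
  have hC : (∑ i ∈ Icc 1 d, Nat.choose (m i) i) ≤ ∑ i ∈ Icc 1 d, Nat.choose (m' i) i := by
    rw [← hCm, ← hCm']; exact hCC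
  obtain ⟨ha, hlow⟩ := macaulay_key d m m' h1 h2 h1' h2' hC
  constructor
  · calc ∑ i ∈ Icc 1 d, Nat.choose ((i : ℤ) + ε i + 1).toNat (i + 1)
        = ∑ i ∈ Icc 1 d, Nat.choose (m i + 1) (i + 1) := by
          refine Finset.sum_congr rfl fun i hi => ?_
          have hbi := hb i hi
          have hi1 : 1 ≤ i := by simp only [Finset.mem_Icc] at hi; omega
          congr 1
          simp only [hm]; omega
      _ ≤ ∑ i ∈ Icc 1 d, Nat.choose (m' i + 1) (i + 1) := ha
      _ = ∑ i ∈ Icc 1 d, Nat.choose ((i : ℤ) + ε' i + 1).toNat (i + 1) := by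
          refine Finset.sum_congr rfl fun i hi => ?_
          have hbi := hb' i hi
          have hi1 : 1 ≤ i := by simp only [Finset.mem_Icc] at hi; omega
          congr 1
          simp only [hm']; omega
  · calc ∑ i ∈ Icc 2 d, Nat.choose ((i : ℤ) + ε i - 1).toNat (i - 1)
        = ∑ i ∈ Icc 2 d, Nat.choose (m i - 1) (i - 1) := by
          refine Finset.sum_congr rfl fun i hi => ?_
          have hi2 : 2 ≤ i ∧ i ≤ d := by simpa [Finset.mem_Icc] using hi
          have hbi := hb i (by simp only [Finset.mem_Icc]; omega)
          congr 1
          simp only [hm]; omega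
      _ ≤ ∑ i ∈ Icc 2 d, Nat.choose (m' i - 1) (i - 1) := hlow
      _ = ∑ i ∈ Icc 2 d, Nat.choose ((i : ℤ) + ε' i - 1).toNat (i - 1) := by
          refine Finset.sum_congr rfl fun i hi => ?_
          have hi2 : 2 ≤ i ∧ i ≤ d := by simpa [Finset.mem_Icc] using hi
          have hbi := hb' i (by simp only [Finset.mem_Icc]; omega)
          congr 1
          simp only [hm']; omega
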